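/- Let ρ be an n×n positive semidefinite matrix with trace 1 whose diagonal entries all satisfy |ρᵢᵢ − 1/n| ≤ ε²/n for some ε ∈ (0,1). Define σ by σᵢⱼ = ρᵢⱼ/(n·√(ρᵢᵢ·ρⱼⱼ)). Then σ is positive semidefinite with all diagonal entries equal to 1/n, and ‖ρ − σ‖_tr ≤ 3ε. -/

import Mathlib

open Matrix

/-- Trace (Schatten-1) norm of a real matrix: trace of the psd square root of AᵀA. -/
noncomputable def traceNorm {m k : Type*} [Fintype m] [Fintype k] [DecidableEq k]
    (A : Matrix m k ℝ) : ℝ :=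
  ((((Matrix.posSemidef_conjTranspose_mul_self A).1.eigenvectorUnitary : Matrix k k ℝ) *
    diagonal (Real.sqrt ∘ (Matrix.posSemidef_conjTranspose_mul_self A).1.eigenvalues) *
    (star (Matrix.posSemidef_conjTranspose_mul_self A).1.eigenvectorUnitary : Matrix k k ℝ))).trace

open scoped MatrixOrder in
lemma psd_sqrt_unique_aux {k : Type*} [Fintype k] [DecidableEq k] {M B C : Matrix k k ℝ}
    (hB : B.PosSemidef) (hC : C.PosSemidef) (h1 : B * B = M) (h2 : C * C = M) : B = C := by
  rw [← CFC.sqrt_unique h1 hB.nonneg, ← CFC.sqrt_unique h2 hC.nonneg]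

open scoped MatrixOrder in
lemma psd_exists_sqrt_aux {k : Type*} [Fintype k] [DecidableEq k] {M : Matrix k k ℝ}
    (hM : M.PosSemidef) : ∃ X : Matrix k k ℝ, X.PosSemidef ∧ X * X = M :=
  ⟨CFC.sqrt M, Matrix.nonneg_iff_posSemidef.mp (CFC.sqrt_nonneg M),
    CFC.sqrt_mul_sqrt_self M hM.nonneg⟩

lemma eigen_sqrt_aux {k : Type*} [Fintype k] [DecidableEq k] {M : Matrix k k ℝ}
    (hM : M.PosSemidef) :
    ((hM.1.eigenvectorUnitary : Matrix k k ℝ) * diagonal (Real.sqrt ∘ hM.1.eigenvalues) *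
      (star hM.1.eigenvectorUnitary : Matrix k k ℝ)).PosSemidef ∧
    ((hM.1.eigenvectorUnitary : Matrix k k ℝ) * diagonal (Real.sqrt ∘ hM.1.eigenvalues) *
      (star hM.1.eigenvectorUnitary : Matrix k k ℝ)) *
    ((hM.1.eigenvectorUnitary : Matrix k k ℝ) * diagonal (Real.sqrt ∘ hM.1.eigenvalues) *
      (star hM.1.eigenvectorUnitary : Matrix k k ℝ)) = M := by
  have hU : (star hM.1.eigenvectorUnitary : Matrix k k ℝ) * (hM.1.eigenvectorUnitary : Matrix k k ℝ) = 1 :=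
    Unitary.coe_star_mul_self _
  constructor
  · have := (posSemidef_diagonal_iff.mpr fun i => Real.sqrt_nonneg (hM.1.eigenvalues i)).mul_mul_conjTranspose_same
      (hM.1.eigenvectorUnitary : Matrix k k ℝ)
    rw [star_eq_conjTranspose]; exact this
  · conv_rhs => rw [hM.1.spectral_theorem]
    rw [Unitary.conjStarAlgAut_apply]
    simp only [mul_assoc]
    rw [← mul_assoc _ (hM.1.eigenvectorUnitary : Matrix k k ℝ), hU, one_mul,
      ← mul_assoc (diagonal _) (diagonal _), diagonal_mul_diagonal]
    congr 3
    ext i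
    simp [Real.mul_self_sqrt (hM.eigenvalues_nonneg i)]

lemma aux_abs_sum_sq_sub {ι : Type*} (s : Finset ι) (a b : ι → ℝ) :
    |∑ k ∈ s, a k ^ 2 - ∑ k ∈ s, b k ^ 2| ≤
      Real.sqrt (∑ k ∈ s, (a k - b k) ^ 2) *
        (Real.sqrt (∑ k ∈ s, a k ^ 2) + Real.sqrt (∑ k ∈ s, b k ^ 2)) := by
  set sa := Real.sqrt (∑ k ∈ s, a k ^ 2) with hsa
  set sb := Real.sqrt (∑ k ∈ s, b k ^ 2) with hsb
  set sc := Real.sqrt (∑ k ∈ s, (a k - b k) ^ 2) with hsc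
  have ha0 : (0:ℝ) ≤ ∑ k ∈ s, a k ^ 2 := Finset.sum_nonneg fun _ _ => sq_nonneg _
  have hb0 : (0:ℝ) ≤ ∑ k ∈ s, b k ^ 2 := Finset.sum_nonneg fun _ _ => sq_nonneg _
  have hsa2 : sa ^ 2 = ∑ k ∈ s, a k ^ 2 := Real.sq_sqrt ha0
  have hsb2 : sb ^ 2 = ∑ k ∈ s, b k ^ 2 := Real.sq_sqrt hb0
  have hsc2 : sc ^ 2 = ∑ k ∈ s, (a k - b k) ^ 2 :=
    Real.sq_sqrt (Finset.sum_nonneg fun _ _ => sq_nonneg _)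
  have hcs : ∑ k ∈ s, a k * b k ≤ sa * sb := Real.sum_mul_le_sqrt_mul_sqrt s a b
  have hkey : |sa - sb| ≤ sc := by
    have h1 : (sa - sb) ^ 2 ≤ sc ^ 2 := by
      have : sc ^ 2 = ∑ k ∈ s, a k ^ 2 + ∑ k ∈ s, b k ^ 2 - 2 * ∑ k ∈ s, a k * b k := by
        rw [hsc2, ← Finset.sum_add_distrib, Finset.mul_sum, ← Finset.sum_sub_distrib]
        congr 1; ext k; ring
      nlinarith [hsa2, hsb2]
    calc |sa - sb| = Real.sqrt ((sa - sb) ^ 2) := (Real.sqrt_sq_eq_abs _).symm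
      _ ≤ Real.sqrt (sc ^ 2) := Real.sqrt_le_sqrt h1
      _ = sc := Real.sqrt_sq (Real.sqrt_nonneg _)
  have hfac : ∑ k ∈ s, a k ^ 2 - ∑ k ∈ s, b k ^ 2 = (sa - sb) * (sa + sb) := by
    rw [← hsa2, ← hsb2]; ring
  rw [hfac, abs_mul, abs_of_nonneg (show (0:ℝ) ≤ sa + sb by positivity)]
  exact mul_le_mul_of_nonneg_right hkey (by positivity)

lemma traceNorm_mul_transpose_sub_le {n : Type*} [Fintype n] [DecidableEq n]
    (X Y : Matrix n n ℝ) :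
    traceNorm (X * Xᵀ - Y * Yᵀ) ≤
      Real.sqrt ((X - Y) * (X - Y)ᵀ).trace *
        Real.sqrt (2 * ((X * Xᵀ).trace + (Y * Yᵀ).trace)) := by
  set A := X * Xᵀ - Y * Yᵀ with hAdef
  have herm : ∀ M : Matrix n n ℝ, (M * Mᵀ).IsHermitian := fun M => by
    rw [← conjTranspose_eq_transpose_of_trivial]
    exact isHermitian_mul_conjTranspose_self M
  have hA : A.IsHermitian := (herm X).sub (herm Y)
  set V : Matrix n n ℝ := (hA.eigenvectorUnitary : Matrix n n ℝ) with hVdef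
  set lam : n → ℝ := hA.eigenvalues with hlamdef
  have hV1 : star V * V = 1 := mem_unitaryGroup_iff'.mp hA.eigenvectorUnitary.2
  have hV2 : V * star V = 1 := mem_unitaryGroup_iff.mp hA.eigenvectorUnitary.2
  have hdiagA : star V * A * V = diagonal lam := by
    have hs : A = V * diagonal lam * star V := by
      have := hA.spectral_theorem
      simpa using this
    conv_lhs => rw [hs]
    simp only [mul_assoc]
    rw [← mul_assoc (star V) V, hV1, one_mul, mul_one]
  -- step 1 : traceNorm A = ∑ |lam i|
  have hstep1 : traceNorm A = ∑ i, |lam i| := by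
    set B := V * diagonal (fun i => |lam i|) * star V with hBdef
    have hBpsd : B.PosSemidef := by
      have hd : (diagonal (fun i => |lam i|)).PosSemidef :=
        posSemidef_diagonal_iff.mpr fun i => abs_nonneg _
      have := hd.mul_mul_conjTranspose_same V
      rw [hBdef, star_eq_conjTranspose]; exact this
    have hspec : A = V * diagonal lam * star V := by
      have := hA.spectral_theorem
      simpa using this
    have hBsq : B ^ 2 = Aᴴ * A := by
      have hAA : Aᴴ = A := hA.eq
      have key : ∀ D E : Matrix n n ℝ,
          (V * D * star V) * (V * E * star V) = V * (D * E) * star V := by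
        intro D E
        simp only [mul_assoc]
        rw [← mul_assoc (star V) V (E * star V), hV1, one_mul]
      rw [hAA, pow_two, hBdef, hspec, key, key, diagonal_mul_diagonal, diagonal_mul_diagonal]
      simp only [abs_mul_abs_self]
    obtain ⟨hC1, hC2⟩ := eigen_sqrt_aux (posSemidef_conjTranspose_mul_self A)
    have hsqrt := psd_sqrt_unique_aux hBpsd hC1 (by rw [← pow_two]; exact hBsq) hC2
    rw [traceNorm, ← hsqrt, hBdef, Matrix.trace_mul_cycle, hV1, one_mul, trace_diagonal]
  -- entry formulas
  have hentry : ∀ (M : Matrix n n ℝ) (i : n),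
      (star V * (M * Mᵀ) * V) i i = ∑ k, ((Mᵀ * V) k i) ^ 2 := by
    intro M i
    have h1 : star V * (M * Mᵀ) * V = (Mᵀ * V)ᵀ * (Mᵀ * V) := by
      rw [transpose_mul, transpose_transpose, star_eq_conjTranspose,
        conjTranspose_eq_transpose_of_trivial]
      simp only [mul_assoc]
    rw [h1, mul_apply]
    congr 1; ext k
    simp [pow_two]
  have hsumtr : ∀ C : Matrix n n ℝ, ∑ i, (star V * C * V) i i = C.trace := by
    intro C
    have : ∑ i, (star V * C * V) i i = (star V * C * V).trace := rfl
    rw [this, Matrix.trace_mul_cycle, hV2, one_mul]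
  -- p, q, r
  set p : n → ℝ := fun i => (star V * (X * Xᵀ) * V) i i with hp
  set q : n → ℝ := fun i => (star V * (Y * Yᵀ) * V) i i with hq
  set r : n → ℝ := fun i => (star V * ((X - Y) * (X - Y)ᵀ) * V) i i with hr
  have hpq : ∀ i, p i - q i = lam i := by
    intro i
    have h1 : star V * A * V = star V * (X * Xᵀ) * V - star V * (Y * Yᵀ) * V := by
      rw [hAdef]; noncomm_ring
    have := congrFun (congrFun (h1.symm.trans hdiagA) i) i
    simpa [Matrix.sub_apply] using this
  have hrnn : ∀ i, 0 ≤ r i := fun i => by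
    rw [show r i = _ from hentry (X - Y) i]; positivity
  have hpnn : ∀ i, 0 ≤ p i := fun i => by
    rw [show p i = _ from hentry X i]; positivity
  have hqnn : ∀ i, 0 ≤ q i := fun i => by
    rw [show q i = _ from hentry Y i]; positivity
  have habs : ∀ i, |lam i| ≤ Real.sqrt (r i) * (Real.sqrt (p i) + Real.sqrt (q i)) := by
    intro i
    rw [← hpq i, show p i = _ from hentry X i, show q i = _ from hentry Y i,
      show r i = _ from hentry (X - Y) i]
    have hXY : (X - Y)ᵀ * V = Xᵀ * V - Yᵀ * V := by rw [transpose_sub, sub_mul]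
    have := aux_abs_sum_sq_sub Finset.univ (fun k => (Xᵀ * V) k i) (fun k => (Yᵀ * V) k i)
    simp only [hXY, Matrix.sub_apply] at this ⊢
    exact this
  -- assemble
  have hsum : ∑ i, |lam i| ≤ Real.sqrt (∑ i, r i) * Real.sqrt (2 * (∑ i, p i + ∑ i, q i)) := by
    calc ∑ i, |lam i| ≤ ∑ i, Real.sqrt (r i) * (Real.sqrt (p i) + Real.sqrt (q i)) :=
          Finset.sum_le_sum fun i _ => habs i
      _ ≤ Real.sqrt (∑ i, (Real.sqrt (r i))^2) *
            Real.sqrt (∑ i, (Real.sqrt (p i) + Real.sqrt (q i))^2) :=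
          Real.sum_mul_le_sqrt_mul_sqrt _ _ _
      _ ≤ Real.sqrt (∑ i, r i) * Real.sqrt (2 * (∑ i, p i + ∑ i, q i)) := by
          apply mul_le_mul
          · apply Real.sqrt_le_sqrt
            apply le_of_eq; congr 1; ext i; exact Real.sq_sqrt (hrnn i)
          · apply Real.sqrt_le_sqrt
            have step : ∀ i : n, (Real.sqrt (p i) + Real.sqrt (q i))^2 ≤ 2 * (p i + q i) := by
              intro i
              have h1 : (Real.sqrt (p i))^2 = p i := Real.sq_sqrt (hpnn i)
              have h2 : (Real.sqrt (q i))^2 = q i := Real.sq_sqrt (hqnn i)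
              nlinarith [sq_nonneg (Real.sqrt (p i) - Real.sqrt (q i))]
            calc ∑ i, (Real.sqrt (p i) + Real.sqrt (q i))^2 ≤ ∑ i, 2 * (p i + q i) :=
                  Finset.sum_le_sum fun i _ => step i
              _ = 2 * (∑ i, p i + ∑ i, q i) := by
                  rw [← Finset.mul_sum, Finset.sum_add_distrib]
          · positivity
          · positivity
  rw [hstep1]
  have e1 : ∑ i, r i = ((X - Y) * (X - Y)ᵀ).trace := hsumtr _
  have e2 : ∑ i, p i = (X * Xᵀ).trace := hsumtr _
  have e3 : ∑ i, q i = (Y * Yᵀ).trace := hsumtr _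
  rw [e1, e2, e3] at hsum
  exact hsum

/-- if ρ is a density matrix with |ρᵢᵢ − 1/n| ≤ ε²/n for all i, then
σᵢⱼ = ρᵢⱼ/(n√(ρᵢᵢρⱼⱼ)) is psd with diagonal entries 1/n and ‖ρ − σ‖_tr ≤ 3ε. -/
theorem rescaled_state_close {n : ℕ} (hn : 0 < n) (ε : ℝ) (hε : 0 < ε) (hε1 : ε < 1)
    (ρ : Matrix (Fin n) (Fin n) ℝ) (hρ : ρ.PosSemidef) (htr : ρ.trace = 1)
    (hdiag : ∀ i, |ρ i i - 1 / n| ≤ ε ^ 2 / n)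
    (σ : Matrix (Fin n) (Fin n) ℝ)
    (hσ : σ = Matrix.of fun i j => ρ i j / (n * Real.sqrt (ρ i i * ρ j j))) :
    σ.PosSemidef ∧ (∀ i, σ i i = 1 / n) ∧ traceNorm (ρ - σ) ≤ 3 * ε := by
  have hn' : (0:ℝ) < n := by exact_mod_cast hn
  have hε2 : ε ^ 2 < 1 := by nlinarith
  have hpos : ∀ i, 0 < ρ i i := by
    intro i
    have h := (abs_le.mp (hdiag i)).1
    have h2 : (0:ℝ) < 1 / n - ε ^ 2 / n := by
      rw [div_sub_div_same]
      apply div_pos (by nlinarith) hn'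
    linarith
  set d : Fin n → ℝ := fun i => 1 / Real.sqrt (n * ρ i i) with hd
  have hsq : ∀ i, (0:ℝ) < Real.sqrt (n * ρ i i) :=
    fun i => Real.sqrt_pos.mpr (mul_pos hn' (hpos i))
  have hσ' : σ = diagonal d * ρ * diagonal d := by
    rw [hσ]
    ext i j
    rw [Matrix.of_apply, mul_diagonal, diagonal_mul]
    have e : Real.sqrt (n * ρ i i) * Real.sqrt (n * ρ j j) = n * Real.sqrt (ρ i i * ρ j j) := by
      rw [← Real.sqrt_mul (mul_nonneg hn'.le (hpos i).le),
        show (n:ℝ) * ρ i i * ((n:ℝ) * ρ j j) = (n:ℝ)^2 * (ρ i i * ρ j j) by ring,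
        Real.sqrt_mul (by positivity), Real.sqrt_sq hn'.le]
    rw [← e, hd]
    have h1 := (hsq i).ne'
    have h2 := (hsq j).ne'
    field_simp
  have hdiagσ : ∀ i, σ i i = 1 / n := by
    intro i
    rw [hσ, Matrix.of_apply, Real.sqrt_mul_self (hpos i).le]
    rw [div_eq_div_iff (by have := hpos i; positivity) hn'.ne']
    ring
  have hpsdσ : σ.PosSemidef := by
    rw [hσ']
    have := hρ.mul_mul_conjTranspose_same (diagonal d)
    simpa [diagonal_conjTranspose] using this
  refine ⟨hpsdσ, hdiagσ, ?_⟩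
  -- trace norm bound
  obtain ⟨X, hXpsd, hXX⟩ := psd_exists_sqrt_aux hρ
  have hXsym : Xᵀ = X := by
    rw [← conjTranspose_eq_transpose_of_trivial]; exact hXpsd.1
  have hXXt : X * Xᵀ = ρ := by rw [hXsym]; exact hXX
  set Y := diagonal d * X with hY
  have hYt : Yᵀ = X * diagonal d := by
    rw [hY, transpose_mul, diagonal_transpose, hXsym]
  have hYYt : Y * Yᵀ = σ := by
    rw [hY, hYt, hσ', mul_assoc, mul_assoc, ← mul_assoc X X, ← hXXt]
    rw [hXsym]
  set e : Fin n → ℝ := fun i => 1 - d i with he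
  have hXY : X - Y = diagonal e * X := by
    rw [he, hY]
    have : diagonal (fun i => 1 - d i) = 1 - diagonal d := by
      rw [← diagonal_one, diagonal_sub]
    rw [this, sub_mul, one_mul]
  have hXYt : (X - Y) * (X - Y)ᵀ = diagonal e * ρ * diagonal e := by
    rw [hXY, transpose_mul, diagonal_transpose, hXsym, mul_assoc, ← mul_assoc X X, ← hXXt, hXsym]
    noncomm_ring
  have htr1 : ((X - Y) * (X - Y)ᵀ).trace ≤ ε ^ 4 := by
    rw [hXYt]
    have hterm : ∀ i, (diagonal e * ρ * diagonal e) i i = e i ^ 2 * ρ i i := by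
      intro i
      rw [mul_diagonal, diagonal_mul]
      ring
    have hbound : ∀ i : Fin n, e i ^ 2 * ρ i i ≤ ε ^ 4 / n := by
      intro i
      have hs : Real.sqrt (ρ i i) ^ 2 = ρ i i := Real.sq_sqrt (hpos i).le
      have hu : Real.sqrt n ^ 2 = (n:ℝ) := Real.sq_sqrt hn'.le
      have hu0 : (0:ℝ) < Real.sqrt n := Real.sqrt_pos.mpr hn'
      have hs0 : (0:ℝ) < Real.sqrt (ρ i i) := Real.sqrt_pos.mpr (hpos i)
      have hds : d i * Real.sqrt (ρ i i) = 1 / Real.sqrt n := by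
        show (1 / Real.sqrt ((n:ℝ) * ρ i i)) * Real.sqrt (ρ i i) = 1 / Real.sqrt n
        rw [Real.sqrt_mul hn'.le]
        have := hs0.ne'
        have := hu0.ne'
        field_simp
      have h3 : e i * Real.sqrt (ρ i i) = Real.sqrt (ρ i i) - 1 / Real.sqrt n := by
        show (1 - d i) * Real.sqrt (ρ i i) = _
        rw [sub_mul, one_mul, hds]
      have he2 : e i ^ 2 * ρ i i = (Real.sqrt (ρ i i) - 1 / Real.sqrt n) ^ 2 := by
        conv_lhs => rw [← hs]
        rw [← h3]
        ring
      rw [he2]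
      have habs := hdiag i
      have hprod : (Real.sqrt (ρ i i) - 1 / Real.sqrt n) * (Real.sqrt (ρ i i) + 1 / Real.sqrt n)
          = ρ i i - 1 / n := by
        have : (Real.sqrt (ρ i i) - 1 / Real.sqrt n) * (Real.sqrt (ρ i i) + 1 / Real.sqrt n)
            = Real.sqrt (ρ i i) ^ 2 - (1 / Real.sqrt n) ^ 2 := by ring
        rw [this, hs, div_pow, one_pow, hu]
      have hsum : Real.sqrt (ρ i i) + 1 / Real.sqrt n ≥ 1 / Real.sqrt n := by linarith
      have h1 : |ρ i i - 1/(n:ℝ)| ≤ ε^2/n := habs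
      have h2 : (ρ i i - 1/(n:ℝ))^2 ≤ (ε^2/n)^2 := by
        have := abs_nonneg (ρ i i - 1/(n:ℝ))
        nlinarith [sq_abs (ρ i i - 1/(n:ℝ))]
      set s := Real.sqrt (ρ i i)
      set t := (1:ℝ) / Real.sqrt n with htdef
      have ht2 : t ^ 2 = 1 / (n:ℝ) := by rw [htdef, div_pow, one_pow, hu]
      have ht0 : 0 < t := by rw [htdef]; positivity
      have hst2 : (1:ℝ)/n ≤ (s + t)^2 := by
        rw [← ht2]
        exact pow_le_pow_left₀ ht0.le hsum 2
      have hsq2 : (s - t)^2 * (s + t)^2 = (ρ i i - 1/(n:ℝ))^2 := by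
        rw [← hprod]; ring
      have step1 : (s - t)^2 * (1/(n:ℝ)) ≤ (s - t)^2 * (s + t)^2 :=
        mul_le_mul_of_nonneg_left hst2 (sq_nonneg _)
      have key : (s - t)^2 * (1/(n:ℝ)) ≤ ε^4 / (n:ℝ)^2 := by
        calc (s - t)^2 * (1/(n:ℝ)) ≤ (s - t)^2 * (s + t)^2 := step1
          _ = (ρ i i - 1/(n:ℝ))^2 := hsq2
          _ ≤ (ε^2/n)^2 := h2
          _ = ε^4 / (n:ℝ)^2 := by ring
      have hkey2 := mul_le_mul_of_nonneg_right key hn'.le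
      calc (s - t)^2 = (s - t)^2 * (1/(n:ℝ)) * n := by field_simp
        _ ≤ ε^4 / (n:ℝ)^2 * n := hkey2
        _ = ε^4 / n := by field_simp
    calc (diagonal e * ρ * diagonal e).trace = ∑ i, (diagonal e * ρ * diagonal e) i i := rfl
      _ = ∑ i, e i ^ 2 * ρ i i := by
          apply Finset.sum_congr rfl; intro i _; exact hterm i
      _ ≤ ∑ _i : Fin n, ε ^ 4 / n := Finset.sum_le_sum fun i _ => hbound i
      _ = ε ^ 4 := by
          rw [Finset.sum_const, Finset.card_univ, Fintype.card_fin, nsmul_eq_mul]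
          field_simp
  have htrY : (Y * Yᵀ).trace = 1 := by
    rw [hYYt]
    have : σ.trace = ∑ i, σ i i := rfl
    rw [this]
    calc ∑ i, σ i i = ∑ _i : Fin n, (1:ℝ)/n := Finset.sum_congr rfl fun i _ => hdiagσ i
      _ = 1 := by
          rw [Finset.sum_const, Finset.card_univ, Fintype.card_fin, nsmul_eq_mul]
          field_simp
  have hmain := traceNorm_mul_transpose_sub_le X Y
  rw [hXXt, hYYt, htr] at hmain
  have htrY' : σ.trace = 1 := by rw [← hYYt]; exact htrY
  rw [htrY'] at hmain
  have hρσ : traceNorm (ρ - σ) ≤ Real.sqrt (((X - Y) * (X - Y)ᵀ).trace) * Real.sqrt (2 * (1 + 1)) := by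
    have : ρ - σ = X * Xᵀ - Y * Yᵀ := by rw [hXXt, hYYt]
    rw [this]
    exact traceNorm_mul_transpose_sub_le X Y |>.trans (by rw [hXXt, hYYt, htr, htrY'])
  have h4 : Real.sqrt (2 * ((1:ℝ) + 1)) = 2 := by
    rw [show (2:ℝ) * (1+1) = 4 by norm_num, show (4:ℝ) = 2^2 by norm_num, Real.sqrt_sq]
    norm_num
  have h5 : Real.sqrt (((X - Y) * (X - Y)ᵀ).trace) ≤ ε ^ 2 := by
    calc Real.sqrt (((X - Y) * (X - Y)ᵀ).trace) ≤ Real.sqrt (ε ^ 4) := Real.sqrt_le_sqrt htr1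
      _ = ε ^ 2 := by
          rw [show ε^4 = (ε^2)^2 by ring, Real.sqrt_sq (by positivity)]
  calc traceNorm (ρ - σ) ≤ Real.sqrt (((X - Y) * (X - Y)ᵀ).trace) * Real.sqrt (2 * (1 + 1)) := hρσ
    _ ≤ ε ^ 2 * 2 := by
        rw [h4]
        exact mul_le_mul_of_nonneg_right h5 (by norm_num)
    _ ≤ 3 * ε := by nlinarith
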